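/- Let f_K(φ, v) = T_s G_b(φ) v with G_b(φ) the offset tracked-vehicle matrix and g_K(Δx, φ) the map sending Δx ∈ ℝ² to G⁺_b(φ) applied to (Δx₁, Δx₂, ξ) for any third component ξ (which is irrelevant since the third column of G⁺_b is zero). Then the first two components of f_K(φ, g_K(Δx, φ)) equal Δx, realizing exact feedback linearization of the planar position of the offset point. -/

import Mathlib

open Real

theorem first_order_feedback_linearization
    (T_s χ d b φ : ℝ) (hT : 0 < T_s) (hχ : χ ∈ Set.Ioc (0:ℝ) 1) (hd : 0 < d) (hb : b ≠ 0) :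
    ∀ (Δx : Fin 2 → ℝ) (ξ : ℝ),
      (T_s • (!![cos φ / 2 + χ * b * sin φ / d, cos φ / 2 - χ * b * sin φ / d;
                 sin φ / 2 - χ * b * cos φ / d, sin φ / 2 + χ * b * cos φ / d;
                 -χ/d, χ/d] : Matrix (Fin 3) (Fin 2) ℝ).mulVec
          ((1 / T_s) • (!![cos φ + d * sin φ / (2*χ*b), sin φ - d * cos φ / (2*χ*b), 0;
              cos φ - d * sin φ / (2*χ*b), sin φ + d * cos φ / (2*χ*b), 0] :
                Matrix (Fin 2) (Fin 3) ℝ).mulVec ![Δx 0, Δx 1, ξ])) 0 = Δx 0 ∧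
      (T_s • (!![cos φ / 2 + χ * b * sin φ / d, cos φ / 2 - χ * b * sin φ / d;
                 sin φ / 2 - χ * b * cos φ / d, sin φ / 2 + χ * b * cos φ / d;
                 -χ/d, χ/d] : Matrix (Fin 3) (Fin 2) ℝ).mulVec
          ((1 / T_s) • (!![cos φ + d * sin φ / (2*χ*b), sin φ - d * cos φ / (2*χ*b), 0;
              cos φ - d * sin φ / (2*χ*b), sin φ + d * cos φ / (2*χ*b), 0] :
                Matrix (Fin 2) (Fin 3) ℝ).mulVec ![Δx 0, Δx 1, ξ])) 1 = Δx 1 := by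
  intro Δx ξ
  have hs : sin φ ^ 2 + cos φ ^ 2 = 1 := sin_sq_add_cos_sq φ
  have hχ0 : χ ≠ 0 := hχ.1.ne'
  have hT0 : T_s ≠ 0 := hT.ne'
  have hd0 : d ≠ 0 := hd.ne'
  refine ⟨?_, ?_⟩ <;>
    simp only [Matrix.mulVec, dotProduct, Fin.sum_univ_succ, Fin.sum_univ_zero,
      Pi.smul_apply, smul_eq_mul, Matrix.cons_val', Matrix.cons_val_zero, Matrix.cons_val_one,
      Matrix.head_cons, Matrix.empty_val', Matrix.cons_val_fin_one, Matrix.head_fin_const,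
      Matrix.of_apply, add_zero, mul_zero, Matrix.cons_val_succ]
  · field_simp
    linear_combination (4 * d * χ * b * Δx 0) * hs
  · field_simp
    linear_combination (4 * d * χ * b * Δx 1) * hs
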